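/- Under the same assumptions as the multilevel complexity theorem but with 0 < β < 1, there exists c₄ such that for every ε < e^{−1} the multilevel estimator can achieve mean square error less than ε² with total computational cost at most c₄ ε^{−2−(1−β)/α}. -/

import Mathlib

open MeasureTheory ProbabilityTheory

set_option maxHeartbeats 2000000

lemma mlmc_geom_aux (T γ : ℝ) (hT : 0 < T) (hγ : 0 < γ) (L : ℕ) :
    ∑ ℓ ∈ Finset.range (L + 1), (T / 2 ^ ℓ) ^ (-γ) ≤
      (2:ℝ) ^ γ / ((2:ℝ) ^ γ - 1) * (T / 2 ^ L) ^ (-γ) := by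
  set r : ℝ := (2:ℝ) ^ γ with hrdef
  have hr1 : 1 < r := Real.one_lt_rpow_iff_of_pos two_pos |>.mpr (Or.inl ⟨one_lt_two, hγ⟩)
  have hr0 : 0 < r - 1 := by linarith
  have key : ∀ ℓ : ℕ, (T / 2 ^ ℓ) ^ (-γ) = T ^ (-γ) * r ^ ℓ := by
    intro ℓ
    rw [Real.div_rpow hT.le (by positivity), hrdef, ← Real.rpow_natCast (2:ℝ) ℓ,
      ← Real.rpow_natCast ((2:ℝ) ^ γ) ℓ, ← Real.rpow_mul (by norm_num),
      ← Real.rpow_mul (by norm_num), div_eq_mul_inv, ← Real.rpow_neg (by norm_num)]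
    congr 1
    ring
  simp only [key]
  rw [← Finset.mul_sum, geom_sum_eq hr1.ne' (L + 1)]
  have h1 : (r ^ (L + 1) - 1) / (r - 1) ≤ r / (r - 1) * r ^ L := by
    rw [div_le_iff₀ hr0]
    have : r / (r - 1) * r ^ L * (r - 1) = r ^ (L + 1) := by
      field_simp; ring
    rw [this]
    linarith
  calc T ^ (-γ) * ((r ^ (L + 1) - 1) / (r - 1))
      ≤ T ^ (-γ) * (r / (r - 1) * r ^ L) := by
        apply mul_le_mul_of_nonneg_left h1 (Real.rpow_nonneg hT.le _)
    _ = r / (r - 1) * (T ^ (-γ) * r ^ L) := by ring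

lemma mlmc_mse_aux {Ω : Type*} [MeasurableSpace Ω] (μ : Measure Ω) [IsProbabilityMeasure μ]
    (S : Ω → ℝ) (hS : MemLp S 2 μ) (c : ℝ) :
    ∫ ω, (S ω - c) ^ 2 ∂μ = variance S μ + ((∫ ω, S ω ∂μ) - c) ^ 2 := by
  set m : ℝ := ∫ ω, S ω ∂μ with hm
  have hSi : Integrable S μ := hS.integrable one_le_two
  have hS2 : MemLp (fun ω => S ω - m) 2 μ := hS.sub (memLp_const m)
  have hsq : Integrable (fun ω => (S ω - m) ^ 2) μ := hS2.integrable_sq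
  have hi : Integrable (fun ω => S ω - m) μ := hSi.sub (integrable_const m)
  have hlin : Integrable (fun ω => 2 * (m - c) * (S ω - m) + (m - c) ^ 2) μ :=
    ((hi.const_mul _).add (integrable_const _))
  have hvar : variance S μ = ∫ ω, (S ω - m) ^ 2 ∂μ := by
    rw [variance_eq_integral hS.aestronglyMeasurable.aemeasurable]
  have hzero : ∫ ω, (S ω - m) ∂μ = 0 := by
    rw [integral_sub hSi (integrable_const m)]
    simp [hm]
  have h2 : ∫ ω, (2 * (m - c) * (S ω - m) + (m - c) ^ 2) ∂μ = (m - c) ^ 2 := by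
    rw [integral_add (hi.const_mul _) (integrable_const _), integral_const_mul, hzero]
    simp
  calc ∫ ω, (S ω - c) ^ 2 ∂μ
      = ∫ ω, ((S ω - m) ^ 2 + (2 * (m - c) * (S ω - m) + (m - c) ^ 2)) ∂μ := by
        congr 1; funext ω; ring
    _ = (∫ ω, (S ω - m) ^ 2 ∂μ) + ∫ ω, (2 * (m - c) * (S ω - m) + (m - c) ^ 2) ∂μ :=
        integral_add hsq hlin
    _ = variance S μ + (m - c) ^ 2 := by rw [hvar, h2]

lemma mlmc_tel (g m : ℕ → ℝ) (h0 : m 0 = g 0)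
    (hs : ∀ ℓ, 1 ≤ ℓ → m ℓ = g ℓ - g (ℓ - 1)) (L : ℕ) :
    ∑ ℓ ∈ Finset.range (L + 1), m ℓ = g L := by
  induction L with
  | zero => simpa using h0
  | succ n ih =>
    rw [Finset.sum_range_succ, ih, hs (n + 1) (by omega)]
    simp

/-- Multilevel Monte Carlo complexity theorem, case `0 < β < 1`:
with bias `|E[P̂_ℓ − P]| ≤ c₁ h_ℓ^α` (`α ≥ 1/2`), independent unbiased level estimators
`Ŷ_ℓ` based on `N_ℓ` samples with `Var[Ŷ_ℓ] ≤ c₂ N_ℓ⁻¹ h_ℓ^β` (`0 < β < 1`), and level cost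
`c₃ N_ℓ h_ℓ⁻¹`, there is `c₄` such that for every `ε < e⁻¹` one can choose `L` and `N_ℓ`
so that the combined estimator has mean square error below `ε²` at total cost `≤ c₄ ε^(−2−(1−β)/α)`. -/
theorem mlmc_complexity_beta_lt_one
    {Ω : Type*} [MeasurableSpace Ω] (μ : Measure Ω) [IsProbabilityMeasure μ]
    (T : ℝ) (hT : 0 < T)
    (P : Ω → ℝ) (hPint : Integrable P μ)
    (Phat : ℕ → Ω → ℝ) (hPhatint : ∀ ℓ, Integrable (Phat ℓ) μ)
    (Y : ℕ → ℕ → Ω → ℝ)   -- `Y ℓ N` : the estimator `Ŷ_ℓ` built from `N` samples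
    (h : ℕ → ℝ) (hh : ∀ ℓ, h ℓ = T / 2 ^ ℓ)
    (c₁ c₂ c₃ α β : ℝ) (hc₁ : 0 < c₁) (hc₂ : 0 < c₂) (hc₃ : 0 < c₃)
    (hα : (1:ℝ)/2 ≤ α) (hβ0 : 0 < β) (hβ1 : β < 1)
    (hYint : ∀ ℓ N, MemLp (Y ℓ N) 2 μ)
    (hindep : ∀ N : ℕ → ℕ, iIndepFun (fun ℓ => Y ℓ (N ℓ)) μ)
    (hbias : ∀ ℓ, |(∫ ω, Phat ℓ ω ∂μ) - ∫ ω, P ω ∂μ| ≤ c₁ * h ℓ ^ α)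
    (hmean0 : ∀ N, ∫ ω, Y 0 N ω ∂μ = ∫ ω, Phat 0 ω ∂μ)
    (hmean : ∀ ℓ N, 1 ≤ ℓ → ∫ ω, Y ℓ N ω ∂μ = ∫ ω, (Phat ℓ ω - Phat (ℓ - 1) ω) ∂μ)
    (hvar : ∀ ℓ N, 0 < N → variance (Y ℓ N) μ ≤ c₂ * (N : ℝ)⁻¹ * h ℓ ^ β) :
    ∃ c₄ : ℝ, 0 < c₄ ∧ ∀ ε : ℝ, 0 < ε → ε < Real.exp (-1) →
      ∃ (L : ℕ) (N : ℕ → ℕ), (∀ ℓ ≤ L, 0 < N ℓ) ∧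
        (∫ ω, ((∑ ℓ ∈ Finset.range (L + 1), Y ℓ (N ℓ) ω) - ∫ ω', P ω' ∂μ) ^ 2 ∂μ < ε ^ 2) ∧
        ∑ ℓ ∈ Finset.range (L + 1), c₃ * (N ℓ : ℝ) * (h ℓ)⁻¹ ≤ c₄ * ε ^ (-2 - (1 - β) / α) := by
  have hα0 : (0:ℝ) < α := lt_of_lt_of_le (by norm_num) hα
  have hβ1' : (0:ℝ) < 1 - β := by linarith
  set γ : ℝ := (1 - β) / 2 with hγdef
  have hγ : 0 < γ := by rw [hγdef]; linarith
  set B : ℝ := max (2 * c₁ * T ^ α) 1 with hBdef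
  have hB1 : (1:ℝ) ≤ B := le_max_right _ _
  have hB0 : (0:ℝ) < B := lt_of_lt_of_le one_pos hB1
  set κ : ℝ := (T / 2) * B ^ (-(1/α)) with hκdef
  have hκ : 0 < κ := mul_pos (by linarith) (Real.rpow_pos_of_pos hB0 _)
  set r : ℝ := (2:ℝ) ^ γ with hrdef
  have hr1 : 1 < r := Real.one_lt_rpow_iff_of_pos two_pos |>.mpr (Or.inl ⟨one_lt_two, hγ⟩)
  set D : ℝ := r / (r - 1) with hDdef
  have hD : 0 < D := div_pos (by linarith) (by linarith)
  have hκγ : 0 < κ ^ (-γ) := Real.rpow_pos_of_pos hκ _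
  set A : ℝ := 4 * c₂ * D * κ ^ (-γ) with hAdef
  have hA : 0 < A := by
    rw [hAdef]; exact mul_pos (mul_pos (by linarith) hD) hκγ
  set p : ℝ := 2 + γ / α with hpdef
  have hhp : ∀ ℓ, 0 < h ℓ := fun ℓ => by rw [hh]; positivity
  refine ⟨c₃ * A * D * κ ^ (-γ) + 2 * c₃ * κ⁻¹, by positivity, ?_⟩
  intro ε hε hεe
  have hε1 : ε < 1 := by
    refine lt_trans hεe ?_
    rw [Real.exp_neg]
    exact inv_lt_one_of_one_lt₀ (by linarith [Real.add_one_lt_exp (one_ne_zero)])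
  have hεp : 0 < ε ^ (-p) := Real.rpow_pos_of_pos hε _
  have hlog2 : 0 < Real.log 2 := Real.log_pos one_lt_two
  have hBε : 1 < B / ε := (one_lt_div hε).mpr (lt_of_lt_of_le hε1 hB1)
  set x : ℝ := Real.log (B / ε) / (α * Real.log 2) with hxdef
  have hx0 : 0 < x := div_pos (Real.log_pos hBε) (by positivity)
  set L : ℕ := ⌈x⌉₊ with hLdef
  set N : ℕ → ℕ := fun ℓ => ⌈A * ε ^ (-p) * (h ℓ) ^ ((1 + β)/2)⌉₊ with hNdef
  have hNpos : ∀ ℓ, 0 < N ℓ := fun ℓ =>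
    Nat.ceil_pos.mpr (mul_pos (mul_pos hA hεp) (Real.rpow_pos_of_pos (hhp ℓ) _))
  have hNge : ∀ ℓ, A * ε ^ (-p) * (h ℓ) ^ ((1 + β)/2) ≤ (N ℓ : ℝ) := fun ℓ => Nat.le_ceil _
  have hNle : ∀ ℓ, (N ℓ : ℝ) ≤ A * ε ^ (-p) * (h ℓ) ^ ((1 + β)/2) + 1 := fun ℓ =>
    (Nat.ceil_lt_add_one (mul_pos (mul_pos hA hεp) (Real.rpow_pos_of_pos (hhp ℓ) _)).le).le
  -- bias control at level L
  have hxle : x ≤ (L : ℝ) := Nat.le_ceil x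
  have hlogle : Real.log (B / ε) ≤ (L : ℝ) * (α * Real.log 2) := by
    have : Real.log (B / ε) = x * (α * Real.log 2) := by
      rw [hxdef]; field_simp
    rw [this]
    exact mul_le_mul_of_nonneg_right hxle (by positivity)
  have h2Lα : B / ε ≤ ((2:ℝ) ^ L) ^ α := by
    have e : ((2:ℝ) ^ L) ^ α = Real.exp ((L : ℝ) * Real.log 2 * α) := by
      rw [← Real.rpow_natCast (2:ℝ) L, ← Real.rpow_mul (by norm_num),
        Real.rpow_def_of_pos two_pos]
      ring_nf
    rw [e, ← Real.exp_log (show (0:ℝ) < B / ε by positivity)]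
    exact Real.exp_le_exp.mpr (by nlinarith [hlogle])
  have hbiasL : c₁ * h L ^ α ≤ ε / 2 := by
    have h2pos : (0:ℝ) < ((2:ℝ) ^ L) ^ α := Real.rpow_pos_of_pos (by positivity) _
    have key : 2 * c₁ * T ^ α ≤ ε * ((2:ℝ) ^ L) ^ α := by
      calc 2 * c₁ * T ^ α ≤ B := le_max_left _ _
        _ = ε * (B / ε) := by field_simp
        _ ≤ ε * ((2:ℝ) ^ L) ^ α := mul_le_mul_of_nonneg_left h2Lα hε.le
    rw [hh, Real.div_rpow hT.le (by positivity), mul_div_assoc',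
      div_le_div_iff₀ h2pos two_pos]
    nlinarith [key]
  -- lower bound on h L
  have hLle : (L : ℝ) ≤ x + 1 := (Nat.ceil_lt_add_one hx0.le).le
  have h2x : (2:ℝ) ^ x = (B / ε) ^ (1/α) := by
    rw [Real.rpow_def_of_pos two_pos, Real.rpow_def_of_pos (show (0:ℝ) < B / ε by positivity),
      hxdef]
    congr 1
    field_simp
  have h2Lle : ((2:ℝ) ^ L : ℝ) ≤ 2 * (B / ε) ^ (1/α) := by
    calc ((2:ℝ) ^ L : ℝ) = (2:ℝ) ^ (L : ℝ) := (Real.rpow_natCast 2 L).symm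
      _ ≤ (2:ℝ) ^ (x + 1) := Real.rpow_le_rpow_of_exponent_le one_le_two hLle
      _ = 2 * (B / ε) ^ (1/α) := by
          rw [Real.rpow_add two_pos, Real.rpow_one, h2x]; ring
  have hε1α : 0 < ε ^ (1/α) := Real.rpow_pos_of_pos hε _
  have hB1α : 0 < B ^ (1/α) := Real.rpow_pos_of_pos hB0 _
  have hhL : κ * ε ^ (1/α) ≤ h L := by
    rw [hh, le_div_iff₀ (by positivity)]
    calc κ * ε ^ (1/α) * 2 ^ L ≤ κ * ε ^ (1/α) * (2 * (B / ε) ^ (1/α)) := by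
          exact mul_le_mul_of_nonneg_left h2Lle (by positivity)
      _ = T := by
          rw [hκdef, Real.div_rpow hB0.le hε.le, Real.rpow_neg hB0.le]
          field_simp
  have hκε : 0 < κ * ε ^ (1/α) := mul_pos hκ hε1α
  -- rpow consequences of hhL
  have hhLγ : (h L) ^ (-γ) ≤ κ ^ (-γ) * ε ^ (-(γ/α)) := by
    have h1 : (h L) ^ (-γ) ≤ (κ * ε ^ (1/α)) ^ (-γ) :=
      Real.rpow_le_rpow_of_nonpos hκε hhL (by linarith)
    rw [Real.mul_rpow hκ.le hε1α.le] at h1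
    have e : (ε ^ (1/α)) ^ (-γ) = ε ^ (-(γ/α)) := by
      rw [← Real.rpow_mul hε.le]
      congr 1
      field_simp
    rwa [e] at h1
  have hhL1 : (h L) ^ (-(1:ℝ)) ≤ κ⁻¹ * ε ^ (-(1/α)) := by
    rw [Real.rpow_neg_one]
    have h1 : (h L)⁻¹ ≤ (κ * ε ^ (1/α))⁻¹ := by
      gcongr
    rw [mul_inv, ← Real.rpow_neg hε.le] at h1
    exact h1
  -- geometric sums
  have hsumγ : ∑ ℓ ∈ Finset.range (L + 1), (h ℓ) ^ (-γ) ≤ D * (h L) ^ (-γ) := by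
    simp only [hh]
    exact mlmc_geom_aux T γ hT hγ L
  have hsum1 : ∑ ℓ ∈ Finset.range (L + 1), (h ℓ) ^ (-(1:ℝ)) ≤ 2 * (h L) ^ (-(1:ℝ)) := by
    simp only [hh]
    have := mlmc_geom_aux T 1 hT one_pos L
    calc ∑ ℓ ∈ Finset.range (L + 1), ((T / 2 ^ ℓ) : ℝ) ^ (-(1:ℝ))
        ≤ (2:ℝ) ^ (1:ℝ) / ((2:ℝ) ^ (1:ℝ) - 1) * (T / 2 ^ L) ^ (-(1:ℝ)) := this
      _ = 2 * (T / 2 ^ L) ^ (-(1:ℝ)) := by rw [Real.rpow_one]; norm_num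
  clear_value γ B κ r D A p x L N
  refine ⟨L, N, fun ℓ _ => hNpos ℓ, ?_, ?_⟩
  · -- MSE
    have hSmem : MemLp (fun ω => ∑ ℓ ∈ Finset.range (L + 1), Y ℓ (N ℓ) ω) 2 μ :=
      memLp_finset_sum _ (fun ℓ _ => hYint ℓ (N ℓ))
    have hmse := mlmc_mse_aux μ _ hSmem (∫ ω', P ω' ∂μ)
    have hvarsum : variance (fun ω => ∑ ℓ ∈ Finset.range (L + 1), Y ℓ (N ℓ) ω) μ
        = ∑ ℓ ∈ Finset.range (L + 1), variance (Y ℓ (N ℓ)) μ := by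
      have heq : (fun ω => ∑ ℓ ∈ Finset.range (L + 1), Y ℓ (N ℓ) ω)
          = ∑ ℓ ∈ Finset.range (L + 1), Y ℓ (N ℓ) := by
        funext ω; simp
      rw [heq]
      exact IndepFun.variance_sum (fun i _ => hYint i (N i))
        (fun i _ j _ hij => (hindep N).indepFun hij)
    have hone : ∀ ℓ, variance (Y ℓ (N ℓ)) μ ≤ c₂ * A⁻¹ * ε ^ p * (h ℓ) ^ (-γ) := by
      intro ℓ
      have h1 := hvar ℓ (N ℓ) (hNpos ℓ)
      have hXpos : 0 < A * ε ^ (-p) * (h ℓ) ^ ((1 + β)/2) :=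
        mul_pos (mul_pos hA hεp) (Real.rpow_pos_of_pos (hhp ℓ) _)
      have hinv : ((N ℓ : ℝ))⁻¹ ≤ (A * ε ^ (-p) * (h ℓ) ^ ((1 + β)/2))⁻¹ :=
        inv_anti₀ hXpos (hNge ℓ)
      have h2 : c₂ * ((N ℓ : ℝ))⁻¹ * h ℓ ^ β
          ≤ c₂ * (A * ε ^ (-p) * (h ℓ) ^ ((1 + β)/2))⁻¹ * h ℓ ^ β :=
        mul_le_mul_of_nonneg_right (mul_le_mul_of_nonneg_left hinv hc₂.le)
          (Real.rpow_nonneg (hhp ℓ).le β)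
      have e1 : (ε ^ (-p))⁻¹ = ε ^ p := by rw [Real.rpow_neg hε.le, inv_inv]
      have e2 : ((h ℓ) ^ ((1 + β)/2))⁻¹ * h ℓ ^ β = (h ℓ) ^ (-γ) := by
        rw [← Real.rpow_neg (hhp ℓ).le, ← Real.rpow_add (hhp ℓ)]
        congr 1
        rw [hγdef]; ring
      have h3 : c₂ * (A * ε ^ (-p) * (h ℓ) ^ ((1 + β)/2))⁻¹ * h ℓ ^ β
          = c₂ * A⁻¹ * ε ^ p * (h ℓ) ^ (-γ) := by
        rw [mul_inv, mul_inv]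
        calc c₂ * (A⁻¹ * (ε ^ (-p))⁻¹ * ((h ℓ) ^ ((1 + β)/2))⁻¹) * h ℓ ^ β
            = c₂ * A⁻¹ * (ε ^ (-p))⁻¹ * (((h ℓ) ^ ((1 + β)/2))⁻¹ * h ℓ ^ β) := by ring
          _ = c₂ * A⁻¹ * ε ^ p * (h ℓ) ^ (-γ) := by rw [e1, e2]
      exact (h1.trans h2).trans_eq h3
    have hAval : c₂ * A⁻¹ * D * κ ^ (-γ) = 1/4 := by
      rw [hAdef]
      field_simp
    have hεpow : ε ^ p * ε ^ (-(γ/α)) = ε ^ 2 := by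
      rw [← Real.rpow_add hε, show p + -(γ/α) = ((2:ℕ):ℝ) by rw [hpdef]; push_cast; ring,
        Real.rpow_natCast]
    have hvarS : variance (fun ω => ∑ ℓ ∈ Finset.range (L + 1), Y ℓ (N ℓ) ω) μ
        ≤ ε ^ 2 / 4 := by
      calc variance (fun ω => ∑ ℓ ∈ Finset.range (L + 1), Y ℓ (N ℓ) ω) μ
          = ∑ ℓ ∈ Finset.range (L + 1), variance (Y ℓ (N ℓ)) μ := hvarsum
        _ ≤ ∑ ℓ ∈ Finset.range (L + 1), c₂ * A⁻¹ * ε ^ p * (h ℓ) ^ (-γ) :=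
            Finset.sum_le_sum fun ℓ _ => hone ℓ
        _ = c₂ * A⁻¹ * ε ^ p * ∑ ℓ ∈ Finset.range (L + 1), (h ℓ) ^ (-γ) := by
            rw [Finset.mul_sum]
        _ ≤ c₂ * A⁻¹ * ε ^ p * (D * (h L) ^ (-γ)) := by
            refine mul_le_mul_of_nonneg_left hsumγ ?_
            have := Real.rpow_pos_of_pos hε p
            positivity
        _ ≤ c₂ * A⁻¹ * ε ^ p * (D * (κ ^ (-γ) * ε ^ (-(γ/α)))) := by
            refine mul_le_mul_of_nonneg_left (mul_le_mul_of_nonneg_left hhLγ hD.le) ?_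
            have := Real.rpow_pos_of_pos hε p
            positivity
        _ = (c₂ * A⁻¹ * D * κ ^ (-γ)) * (ε ^ p * ε ^ (-(γ/α))) := by ring
        _ = ε ^ 2 / 4 := by rw [hAval, hεpow]; ring
    have hES : ∫ ω, (∑ ℓ ∈ Finset.range (L + 1), Y ℓ (N ℓ) ω) ∂μ = ∫ ω, Phat L ω ∂μ := by
      rw [integral_finset_sum _ (fun ℓ _ => (hYint ℓ (N ℓ)).integrable one_le_two)]
      exact mlmc_tel (fun ℓ => ∫ ω, Phat ℓ ω ∂μ) (fun ℓ => ∫ ω, Y ℓ (N ℓ) ω ∂μ)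
        (hmean0 _) (fun ℓ hℓ => by
          show ∫ ω, Y ℓ (N ℓ) ω ∂μ = (∫ ω, Phat ℓ ω ∂μ) - ∫ ω, Phat (ℓ - 1) ω ∂μ
          rw [hmean ℓ _ hℓ, integral_sub (hPhatint _) (hPhatint _)]) L
    have hbias2 : ((∫ ω, (∑ ℓ ∈ Finset.range (L + 1), Y ℓ (N ℓ) ω) ∂μ) - ∫ ω', P ω' ∂μ) ^ 2
        ≤ ε ^ 2 / 4 := by
      rw [hES]
      have h1 : |(∫ ω, Phat L ω ∂μ) - ∫ ω', P ω' ∂μ| ≤ ε / 2 := (hbias L).trans hbiasL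
      calc ((∫ ω, Phat L ω ∂μ) - ∫ ω', P ω' ∂μ) ^ 2
          = |(∫ ω, Phat L ω ∂μ) - ∫ ω', P ω' ∂μ| ^ 2 := (sq_abs _).symm
        _ ≤ (ε / 2) ^ 2 := pow_le_pow_left₀ (abs_nonneg _) h1 2
        _ = ε ^ 2 / 4 := by ring
    calc ∫ ω, ((∑ ℓ ∈ Finset.range (L + 1), Y ℓ (N ℓ) ω) - ∫ ω', P ω' ∂μ) ^ 2 ∂μ
        = variance (fun ω => ∑ ℓ ∈ Finset.range (L + 1), Y ℓ (N ℓ) ω) μ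
          + ((∫ ω, (∑ ℓ ∈ Finset.range (L + 1), Y ℓ (N ℓ) ω) ∂μ) - ∫ ω', P ω' ∂μ) ^ 2 := hmse
      _ ≤ ε ^ 2 / 4 + ε ^ 2 / 4 := add_le_add hvarS hbias2
      _ < ε ^ 2 := by linarith [pow_pos hε 2]
  · -- cost
    have e3 : ∀ ℓ : ℕ, c₃ * (A * ε ^ (-p) * (h ℓ) ^ ((1 + β)/2) + 1) * (h ℓ)⁻¹
        = c₃ * A * ε ^ (-p) * (h ℓ) ^ (-γ) + c₃ * (h ℓ) ^ (-(1:ℝ)) := by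
      intro ℓ
      have e4 : (h ℓ) ^ ((1 + β)/2) * (h ℓ)⁻¹ = (h ℓ) ^ (-γ) := by
        rw [← Real.rpow_neg_one (h ℓ), ← Real.rpow_add (hhp ℓ)]
        congr 1
        rw [hγdef]; ring
      have e5 : (h ℓ)⁻¹ = (h ℓ) ^ (-(1:ℝ)) := (Real.rpow_neg_one _).symm
      calc c₃ * (A * ε ^ (-p) * (h ℓ) ^ ((1 + β)/2) + 1) * (h ℓ)⁻¹
          = c₃ * A * ε ^ (-p) * ((h ℓ) ^ ((1 + β)/2) * (h ℓ)⁻¹) + c₃ * (h ℓ)⁻¹ := by ring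
        _ = c₃ * A * ε ^ (-p) * (h ℓ) ^ (-γ) + c₃ * (h ℓ) ^ (-(1:ℝ)) := by rw [e4, e5]
    have e7 : ε ^ (-(1/α)) ≤ ε ^ (-2 - (1 - β)/α) := by
      refine Real.rpow_le_rpow_of_exponent_ge hε hε1.le ?_
      have h1α : 1/α ≤ 2 := by rw [div_le_iff₀ hα0]; linarith
      have h2α : 0 ≤ (1 - β)/α := div_nonneg (by linarith) hα0.le
      linarith
    have e6 : ε ^ (-p) * ε ^ (-(γ/α)) = ε ^ (-2 - (1 - β)/α) := by
      rw [← Real.rpow_add hε]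
      congr 1
      rw [hpdef, hγdef]
      field_simp
      ring
    have hc3A : (0:ℝ) ≤ c₃ * A * ε ^ (-p) := by
      have := Real.rpow_pos_of_pos hε (-p)
      positivity
    calc ∑ ℓ ∈ Finset.range (L + 1), c₃ * (N ℓ : ℝ) * (h ℓ)⁻¹
        ≤ ∑ ℓ ∈ Finset.range (L + 1),
            c₃ * (A * ε ^ (-p) * (h ℓ) ^ ((1 + β)/2) + 1) * (h ℓ)⁻¹ := by
          refine Finset.sum_le_sum fun ℓ _ => ?_
          exact mul_le_mul_of_nonneg_right
            (mul_le_mul_of_nonneg_left (hNle ℓ) hc₃.le)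
            (inv_nonneg.mpr (hhp ℓ).le)
      _ = c₃ * A * ε ^ (-p) * (∑ ℓ ∈ Finset.range (L + 1), (h ℓ) ^ (-γ))
          + c₃ * ∑ ℓ ∈ Finset.range (L + 1), (h ℓ) ^ (-(1:ℝ)) := by
          rw [Finset.sum_congr rfl fun ℓ _ => e3 ℓ, Finset.sum_add_distrib,
            ← Finset.mul_sum, ← Finset.mul_sum]
      _ ≤ c₃ * A * ε ^ (-p) * (D * (h L) ^ (-γ)) + c₃ * (2 * (h L) ^ (-(1:ℝ))) :=
          add_le_add (mul_le_mul_of_nonneg_left hsumγ hc3A)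
            (mul_le_mul_of_nonneg_left hsum1 hc₃.le)
      _ ≤ c₃ * A * ε ^ (-p) * (D * (κ ^ (-γ) * ε ^ (-(γ/α))))
          + c₃ * (2 * (κ⁻¹ * ε ^ (-(1/α)))) :=
          add_le_add
            (mul_le_mul_of_nonneg_left (mul_le_mul_of_nonneg_left hhLγ hD.le) hc3A)
            (mul_le_mul_of_nonneg_left
              (mul_le_mul_of_nonneg_left hhL1 (by norm_num)) hc₃.le)
      _ = c₃ * A * D * κ ^ (-γ) * (ε ^ (-p) * ε ^ (-(γ/α)))
          + 2 * c₃ * κ⁻¹ * ε ^ (-(1/α)) := by ring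
      _ ≤ c₃ * A * D * κ ^ (-γ) * ε ^ (-2 - (1 - β)/α)
          + 2 * c₃ * κ⁻¹ * ε ^ (-2 - (1 - β)/α) := by
          rw [e6]
          refine add_le_add le_rfl (mul_le_mul_of_nonneg_left e7 ?_)
          exact mul_nonneg (by linarith) (inv_nonneg.mpr hκ.le)
      _ = (c₃ * A * D * κ ^ (-γ) + 2 * c₃ * κ⁻¹) * ε ^ (-2 - (1 - β)/α) := by ring
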